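/- Let A be a residuated lattice, F a filter of A, and P a prime filter of A. Then D_F(P) = ⋂{m | m is an F-minimal prime filter of A and m ⊆ P} (where the intersection over the empty family is A). -/
import Mathlib


class ResiduatedLattice (α : Type*) extends Lattice α, CommMonoid α, BoundedOrder α where
  rimp : α → α → α
  one_eq_top : (1 : α) = ⊤
  adjunction : ∀ x y z : α, x * y ≤ z ↔ x ≤ rimp y z

variable {α : Type*} [ResiduatedLattice α]

/-- A filter of a residuated lattice: nonempty, closed under `⊙` and upward closed. -/
def IsFilter (F : Set α) : Prop :=
  F.Nonempty ∧ (∀ x ∈ F, ∀ y ∈ F, x * y ∈ F) ∧ ∀ x ∈ F, ∀ y : α, x ≤ y → y ∈ F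

/-- A prime filter: a proper filter such that `x ⊔ y ∈ P` implies `x ∈ P` or `y ∈ P`. -/
def IsPrimeFilter (P : Set α) : Prop :=
  IsFilter P ∧ P ≠ Set.univ ∧ ∀ x y : α, x ⊔ y ∈ P → x ∈ P ∨ y ∈ P

/-- A `∨`-closed subset: nonempty and closed under join. -/
def IsJoinClosed (C : Set α) : Prop :=
  C.Nonempty ∧ ∀ x ∈ C, ∀ y ∈ C, x ⊔ y ∈ C

/-- The filter generated by a set. -/
def filterGen (X : Set α) : Set α := ⋂₀ {G : Set α | IsFilter G ∧ X ⊆ G}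

/-- An `X`-minimal prime filter: prime, contains `X`, minimal among primes containing `X`. -/
def IsMinPrimeOver (X P : Set α) : Prop :=
  IsPrimeFilter P ∧ X ⊆ P ∧ ∀ Q : Set α, IsPrimeFilter Q → X ⊆ Q → Q ⊆ P → Q = P

/-- `ω_F(X) = {a | x ∨ a ∈ F for some x ∈ X}`. -/
def omegaF (F X : Set α) : Set α := {a : α | ∃ x ∈ X, x ⊔ a ∈ F}

/-- The coannihilator `(F : x) = {a | x ∨ a ∈ F}`. -/
def coann (F : Set α) (x : α) : Set α := {a : α | x ⊔ a ∈ F}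

/-- `D_F(H) = {a | x ∨ a ∈ F for some x ∉ H}`, the set of `F`-divisors of `H`. -/
def divisorsF (F H : Set α) : Set α := {a : α | ∃ x ∉ H, x ⊔ a ∈ F}

/-- A lattice ideal: nonempty, closed under join and downward closed. -/
def IsLatticeIdeal (I : Set α) : Prop :=
  I.Nonempty ∧ (∀ x ∈ I, ∀ y ∈ I, x ⊔ y ∈ I) ∧ ∀ x y : α, x ≤ y → y ∈ I → x ∈ I

/-- The lattice ideal generated by a set. -/
def idealGen (X : Set α) : Set α := ⋂₀ {I : Set α | IsLatticeIdeal I ∧ X ⊆ I}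

/-- An `ω_F`-filter: a filter of the form `ω_F(I)` for some lattice ideal `I`. -/
def IsOmegaFilter (F H : Set α) : Prop :=
  IsFilter H ∧ ∃ I : Set α, IsLatticeIdeal I ∧ H = omegaF F I

open ResiduatedLattice

lemma rl_mul_le_mul_left (x : α) {y z : α} (h : y ≤ z) : x * y ≤ x * z := by
  have h1 : z ≤ rimp x (x * z) := (adjunction z x (x * z)).mp (le_of_eq (mul_comm z x))
  have h2 : y * x ≤ x * z := (adjunction y x (x * z)).mpr (h.trans h1)
  rwa [mul_comm] at h2

lemma rl_mul_le_mul_right {y z : α} (h : y ≤ z) (x : α) : y * x ≤ z * x := by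
  rw [mul_comm y x, mul_comm z x]; exact rl_mul_le_mul_left x h

lemma rl_le_one (x : α) : x ≤ 1 := one_eq_top (α := α) ▸ le_top

lemma rl_mul_le_left (x y : α) : x * y ≤ x := by
  have := rl_mul_le_mul_left x (rl_le_one y); rwa [mul_one] at this

lemma rl_mul_le_right (x y : α) : x * y ≤ y := by
  rw [mul_comm]; exact rl_mul_le_left y x

lemma rl_mul_sup (x y z : α) : x * (y ⊔ z) ≤ x * y ⊔ x * z := by
  rw [mul_comm]
  refine (adjunction _ x _).mpr (sup_le ?_ ?_)
  · exact (adjunction y x _).mp (by rw [mul_comm]; exact le_sup_left)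
  · exact (adjunction z x _).mp (by rw [mul_comm]; exact le_sup_right)

lemma rl_pow_sup (x y : α) : ∀ k m n : ℕ, m + n = k → (x ⊔ y) ^ k ≤ x ^ m ⊔ y ^ n := by
  intro k
  induction k with
  | zero =>
    intro m n h
    obtain ⟨rfl, rfl⟩ : m = 0 ∧ n = 0 := by omega
    simp [pow_zero, one_eq_top (α := α)]
  | succ k ih =>
    intro m n h
    match m with
    | 0 => simpa [pow_zero, one_eq_top (α := α)] using le_top
    | m' + 1 =>
      have key : (x ⊔ y) ^ (k + 1) = (x ⊔ y) ^ k * (x ⊔ y) := pow_succ _ _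
      have hsplit : (x ⊔ y) ^ k * (x ⊔ y) ≤ (x ⊔ y) ^ k * x ⊔ (x ⊔ y) ^ k * y :=
        rl_mul_sup _ _ _
      have t1 : (x ⊔ y) ^ k * x ≤ x ^ (m' + 1) ⊔ y ^ n := by
        have h1 : (x ⊔ y) ^ k ≤ x ^ m' ⊔ y ^ n := ih m' n (by omega)
        calc (x ⊔ y) ^ k * x ≤ (x ^ m' ⊔ y ^ n) * x := rl_mul_le_mul_right h1 x
          _ = x * (x ^ m' ⊔ y ^ n) := mul_comm _ _
          _ ≤ x * x ^ m' ⊔ x * y ^ n := rl_mul_sup _ _ _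
          _ ≤ x ^ (m' + 1) ⊔ y ^ n := by
              apply sup_le
              · exact le_sup_of_le_left (le_of_eq (by rw [pow_succ, mul_comm]))
              · exact le_sup_of_le_right (rl_mul_le_right _ _)
      have t2 : (x ⊔ y) ^ k * y ≤ x ^ (m' + 1) ⊔ y ^ n := by
        match n with
        | 0 => simpa [pow_zero, one_eq_top (α := α)] using le_top
        | n' + 1 =>
          have h1 : (x ⊔ y) ^ k ≤ x ^ (m' + 1) ⊔ y ^ n' := ih (m' + 1) n' (by omega)
          calc (x ⊔ y) ^ k * y ≤ (x ^ (m' + 1) ⊔ y ^ n') * y := rl_mul_le_mul_right h1 y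
            _ = y * (x ^ (m' + 1) ⊔ y ^ n') := mul_comm _ _
            _ ≤ y * x ^ (m' + 1) ⊔ y * y ^ n' := rl_mul_sup _ _ _
            _ ≤ x ^ (m' + 1) ⊔ y ^ (n' + 1) := by
                apply sup_le
                · exact le_sup_of_le_left (rl_mul_le_right _ _)
                · exact le_sup_of_le_right (le_of_eq (by rw [pow_succ, mul_comm]))
      exact key ▸ hsplit.trans (sup_le t1 t2)

lemma rl_pow_mem {M : Set α} (hM : IsFilter M) {z : α} (hz : z ∈ M) : ∀ n : ℕ, z ^ n ∈ M := by
  intro n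
  induction n with
  | zero =>
    have : z ≤ 1 := rl_le_one z
    simpa [pow_zero] using hM.2.2 z hz 1 this
  | succ n ih =>
    rw [pow_succ]
    exact hM.2.1 _ ih _ hz

/-- Prime separation: a filter disjoint from a nonempty join-closed set extends to a
prime filter disjoint from it. -/
lemma rl_prime_sep (G J : Set α) (hG : IsFilter G) (hJne : J.Nonempty)
    (hJ : ∀ x ∈ J, ∀ y ∈ J, x ⊔ y ∈ J) (hdisj : ∀ g ∈ G, g ∉ J) :
    ∃ Q : Set α, IsPrimeFilter Q ∧ G ⊆ Q ∧ ∀ q ∈ Q, q ∉ J := by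
  set S : Set (Set α) := {Q | IsFilter Q ∧ G ⊆ Q ∧ ∀ q ∈ Q, q ∉ J} with hS
  have hchains : ∀ c ⊆ S, IsChain (· ⊆ ·) c → c.Nonempty →
      ∃ ub ∈ S, ∀ s ∈ c, s ⊆ ub := by
    intro c hcS hchain hcne
    refine ⟨⋃₀ c, ⟨?_, ?_, ?_⟩, ?_⟩
    · obtain ⟨Q0, hQ0⟩ := hcne
      obtain ⟨q0, hq0⟩ := (hcS hQ0).1.1
      refine ⟨⟨q0, Q0, hQ0, hq0⟩, ?_, ?_⟩
      · rintro z1 ⟨Q1, hQ1, hz1⟩ z2 ⟨Q2, hQ2, hz2⟩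
        rcases hchain.total hQ1 hQ2 with h | h
        · exact ⟨Q2, hQ2, (hcS hQ2).1.2.1 _ (h hz1) _ hz2⟩
        · exact ⟨Q1, hQ1, (hcS hQ1).1.2.1 _ hz1 _ (h hz2)⟩
      · rintro z ⟨Q1, hQ1, hz⟩ w hzw
        exact ⟨Q1, hQ1, (hcS hQ1).1.2.2 _ hz _ hzw⟩
    · obtain ⟨Q0, hQ0⟩ := hcne
      exact (hcS hQ0).2.1.trans (Set.subset_sUnion_of_mem hQ0)
    · rintro q ⟨Q1, hQ1, hq⟩
      exact (hcS hQ1).2.2 q hq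
    · exact fun s hs => Set.subset_sUnion_of_mem hs
  obtain ⟨M, hGM, hMmax⟩ := zorn_subset_nonempty S hchains G ⟨hG, le_refl G, hdisj⟩
  obtain ⟨hMfil, hGsub, hMdisj⟩ := hMmax.prop
  obtain ⟨j0, hj0⟩ := hJne
  refine ⟨M, ⟨hMfil, ?_, ?_⟩, hGsub, hMdisj⟩
  · intro h
    exact hMdisj j0 (h ▸ Set.mem_univ j0) hj0
  · intro x y hxy
    by_contra hcon
    push_neg at hcon
    obtain ⟨hx, hy⟩ := hcon
    have gen : ∀ e : α, e ∉ M →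
        ∃ q ∈ M, ∃ n : ℕ, ∃ j ∈ J, q * e ^ n ≤ j := by
      intro e he
      set Me : Set α := {z | ∃ q ∈ M, ∃ n : ℕ, q * e ^ n ≤ z} with hMe
      have hMefil : IsFilter Me := by
        obtain ⟨m0, hm0⟩ := hMfil.1
        refine ⟨⟨m0, m0, hm0, 0, by simpa [pow_zero, mul_one] using le_refl m0⟩, ?_, ?_⟩
        · rintro z1 ⟨q1, hq1, n1, h1⟩ z2 ⟨q2, hq2, n2, h2⟩
          refine ⟨q1 * q2, hMfil.2.1 _ hq1 _ hq2, n1 + n2, ?_⟩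
          have heq : q1 * q2 * e ^ (n1 + n2) = (q1 * e ^ n1) * (q2 * e ^ n2) := by
            rw [pow_add, mul_mul_mul_comm]
          rw [heq]
          exact le_trans (rl_mul_le_mul_right h1 _) (rl_mul_le_mul_left _ h2)
        · rintro z ⟨q, hq, n, hle⟩ w hzw
          exact ⟨q, hq, n, hle.trans hzw⟩
      have hMsub : M ⊆ Me := fun m hm =>
        ⟨m, hm, 0, by simpa [pow_zero, mul_one] using le_refl m⟩
      have heMe : e ∈ Me := by
        obtain ⟨m0, hm0⟩ := hMfil.1
        exact ⟨m0, hm0, 1, by simpa [pow_one] using rl_mul_le_right m0 e⟩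
      have hMeNot : Me ∉ S := fun hmem => he (hMmax.le_of_ge hmem hMsub heMe)
      have hz : ∃ z ∈ Me, z ∈ J := by
        by_contra hcon2
        push_neg at hcon2
        exact hMeNot ⟨hMefil, hGsub.trans hMsub, hcon2⟩
      obtain ⟨z, ⟨q, hq, n, hle⟩, hzJ⟩ := hz
      exact ⟨q, hq, n, z, hzJ, hle⟩
    obtain ⟨q1, hq1, n1, j1, hj1, hle1⟩ := gen x hx
    obtain ⟨q2, hq2, n2, j2, hj2, hle2⟩ := gen y hy
    have hqM : q1 * q2 ∈ M := hMfil.2.1 _ hq1 _ hq2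
    have hpowM : (x ⊔ y) ^ (n1 + n2) ∈ M := rl_pow_mem hMfil hxy _
    have hbig : q1 * q2 * (x ⊔ y) ^ (n1 + n2) ∈ M := hMfil.2.1 _ hqM _ hpowM
    have hle : q1 * q2 * (x ⊔ y) ^ (n1 + n2) ≤ j1 ⊔ j2 := by
      have h1 : (x ⊔ y) ^ (n1 + n2) ≤ x ^ n1 ⊔ y ^ n2 := rl_pow_sup x y _ n1 n2 rfl
      calc q1 * q2 * (x ⊔ y) ^ (n1 + n2)
          ≤ q1 * q2 * (x ^ n1 ⊔ y ^ n2) := rl_mul_le_mul_left _ h1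
        _ ≤ q1 * q2 * x ^ n1 ⊔ q1 * q2 * y ^ n2 := rl_mul_sup _ _ _
        _ ≤ j1 ⊔ j2 := by
            apply sup_le
            · refine le_sup_of_le_left ?_
              calc q1 * q2 * x ^ n1 = q1 * x ^ n1 * q2 := mul_right_comm _ _ _
                _ ≤ q1 * x ^ n1 := rl_mul_le_left _ _
                _ ≤ j1 := hle1
            · refine le_sup_of_le_right ?_
              calc q1 * q2 * y ^ n2 = q2 * y ^ n2 * q1 := by
                    rw [mul_comm q1 q2, mul_right_comm]
                _ ≤ q2 * y ^ n2 := rl_mul_le_left _ _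
                _ ≤ j2 := hle2
    have hjM : j1 ⊔ j2 ∈ M := hMfil.2.2 _ hbig _ hle
    exact hMdisj _ hjM (hJ _ hj1 _ hj2)

/-- Every prime filter containing `F` contains an `F`-minimal prime filter. -/
lemma rl_exists_minprime (F Q : Set α) (hF : IsFilter F) (hQ : IsPrimeFilter Q)
    (hFQ : F ⊆ Q) : ∃ m : Set α, IsMinPrimeOver F m ∧ m ⊆ Q := by
  set S : Set (Set α) := {R | IsPrimeFilter R ∧ F ⊆ R ∧ R ⊆ Q} with hS
  have hchains : ∀ c ⊆ S, IsChain (· ⊆ ·) c → c.Nonempty →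
      ∃ lb ∈ S, ∀ s ∈ c, lb ⊆ s := by
    intro c hcS hchain hcne
    refine ⟨⋂₀ c, ⟨⟨⟨?_, ?_, ?_⟩, ?_, ?_⟩, ?_, ?_⟩, ?_⟩
    · obtain ⟨f0, hf0⟩ := hF.1
      exact ⟨f0, fun R hR => (hcS hR).2.1 hf0⟩
    · intro z1 hz1 z2 hz2 R hR
      exact (hcS hR).1.1.2.1 _ (hz1 R hR) _ (hz2 R hR)
    · intro z hz w hzw R hR
      exact (hcS hR).1.1.2.2 _ (hz R hR) _ hzw
    · obtain ⟨R0, hR0⟩ := hcne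
      intro h
      apply (hcS hR0).1.2.1
      apply Set.eq_univ_of_univ_subset
      rw [← h]
      exact Set.sInter_subset_of_mem hR0
    · intro x y hxy
      by_contra hcon
      push_neg at hcon
      obtain ⟨hx, hy⟩ := hcon
      simp only [Set.mem_sInter, not_forall] at hx hy
      obtain ⟨R1, hR1, hxR1⟩ := hx
      obtain ⟨R2, hR2, hyR2⟩ := hy
      rcases hchain.total hR1 hR2 with h | h
      · rcases (hcS hR1).1.2.2 x y (hxy R1 hR1) with h' | h'
        · exact hxR1 h'
        · exact hyR2 (h h')
      · rcases (hcS hR2).1.2.2 x y (hxy R2 hR2) with h' | h'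
        · exact hxR1 (h h')
        · exact hyR2 h'
    · intro f hf R hR
      exact (hcS hR).2.1 hf
    · obtain ⟨R0, hR0⟩ := hcne
      exact (Set.sInter_subset_of_mem hR0).trans (hcS hR0).2.2
    · exact fun s hs => Set.sInter_subset_of_mem hs
  obtain ⟨m, hmQ, hmmin⟩ := zorn_superset_nonempty S hchains Q ⟨hQ, hFQ, le_refl Q⟩
  obtain ⟨hmprime, hFm, hmsubQ⟩ := hmmin.prop
  refine ⟨m, ⟨hmprime, hFm, ?_⟩, hmsubQ⟩
  intro R hR hFR hRm
  exact le_antisymm hRm (hmmin.le_of_le ⟨hR, hFR, hRm.trans hmsubQ⟩ hRm)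

/-- Corollary 3.21: `D_F(P)` is the intersection of the `F`-minimal prime
filters contained in `P`. -/
theorem stmt_14 (F P : Set α) (hF : IsFilter F) (hP : IsPrimeFilter P) :
    divisorsF F P = ⋂₀ {m : Set α | IsMinPrimeOver F m ∧ m ⊆ P} := by
  ext a
  simp only [divisorsF, Set.mem_setOf_eq, Set.mem_sInter]
  constructor
  · rintro ⟨x, hxP, hxa⟩ m ⟨hm, hmP⟩
    have hxm : x ⊔ a ∈ m := hm.2.1 hxa
    rcases hm.1.2.2 x a hxm with h | h
    · exact absurd (hmP h) hxP
    · exact h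
  · intro ha
    by_contra hnot
    push_neg at hnot
    -- hnot : ∀ x ∉ P, x ⊔ a ∉ F
    obtain ⟨x0, hx0⟩ := Set.ne_univ_iff_exists_notMem P |>.mp hP.2.1
    set G : Set α := {x | x ⊔ a ∈ F} with hG
    have hFG : F ⊆ G := fun f hf => hF.2.2 f hf _ le_sup_left
    have hGfil : IsFilter G := by
      refine ⟨hF.1.imp fun f hf => hFG hf, ?_, ?_⟩
      · intro x hx y hy
        have hmul : (x ⊔ a) * (y ⊔ a) ∈ F := hF.2.1 _ hx _ hy
        have hle : (x ⊔ a) * (y ⊔ a) ≤ x * y ⊔ a := by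
          calc (x ⊔ a) * (y ⊔ a) ≤ (x ⊔ a) * y ⊔ (x ⊔ a) * a := rl_mul_sup _ _ _
            _ ≤ x * y ⊔ a := by
                apply sup_le
                · calc (x ⊔ a) * y = y * (x ⊔ a) := mul_comm _ _
                    _ ≤ y * x ⊔ y * a := rl_mul_sup _ _ _
                    _ ≤ x * y ⊔ a := by
                        apply sup_le
                        · exact le_sup_of_le_left (le_of_eq (mul_comm y x))
                        · exact le_sup_of_le_right (rl_mul_le_right _ _)
                · exact le_sup_of_le_right (rl_mul_le_right _ _)
        exact hF.2.2 _ hmul _ hle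
      · intro x hx y hxy
        exact hF.2.2 _ hx _ (sup_le_sup_right hxy a)
    have hGP : G ⊆ P := by
      intro x hx
      by_contra hxP
      exact hnot x hxP hx
    set J : Set α := {z | ∃ x, x ∉ P ∧ z ≤ x ⊔ a} with hJ
    have hJne : J.Nonempty := ⟨x0 ⊔ a, x0, hx0, le_refl _⟩
    have hJjoin : ∀ z1 ∈ J, ∀ z2 ∈ J, z1 ⊔ z2 ∈ J := by
      rintro z1 ⟨x1, hx1, h1⟩ z2 ⟨x2, hx2, h2⟩
      refine ⟨x1 ⊔ x2, ?_, ?_⟩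
      · intro h
        rcases hP.2.2 x1 x2 h with h' | h'
        · exact hx1 h'
        · exact hx2 h'
      · apply sup_le
        · exact h1.trans (sup_le_sup_right le_sup_left a)
        · exact h2.trans (sup_le_sup_right le_sup_right a)
    have hdisj : ∀ g ∈ G, g ∉ J := by
      rintro g hg ⟨x, hxP, hgle⟩
      have : x ⊔ a ∈ F := hF.2.2 _ hg _ (sup_le (hgle.trans (le_refl _)) le_sup_right)
      exact hxP (hGP this)
    obtain ⟨Q, hQprime, hGQ, hQdisj⟩ := rl_prime_sep G J hGfil hJne hJjoin hdisj
    have hQP : Q ⊆ P := by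
      intro q hq
      by_contra hqP
      exact hQdisj q hq ⟨q, hqP, le_sup_left⟩
    have haQ : a ∉ Q := fun h => hQdisj a h ⟨x0, hx0, le_sup_right⟩
    obtain ⟨m, hmmin, hmQ⟩ := rl_exists_minprime F Q hF hQprime (hFG.trans hGQ)
    exact haQ (hmQ (ha m ⟨hmmin, hmQ.trans hQP⟩))
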